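/- Assume P = ∏_{i=1}^n P_i where each P_i ⊆ Σ_n is a closed convex set and every matrix with rows in the P_i is irreducible. Then the set R of occupation measures ρ_{i,j} = π_i P_{i,j} arising from matrices P ∈ P (with π the invariant measure of P) is closed and convex; moreover if every P_i is a polytope then R is a polytope. -/

import Mathlib

open BigOperators Matrix

/-- A nonnegative matrix is irreducible: for all `i j` some power has positive `(i,j)` entry. -/
def IsIrredMat {n : ℕ} (A : Matrix (Fin n) (Fin n) ℝ) : Prop :=
  ∀ i j, ∃ k : ℕ, 0 < (A ^ k) i j

lemma aux_piv_pos {n : ℕ} (P : Matrix (Fin n) (Fin n) ℝ) (piv : Fin n → ℝ)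
    (hP0 : ∀ i j, 0 ≤ P i j) (hirr : IsIrredMat P) (h0 : ∀ i, 0 ≤ piv i)
    (h1 : ∑ i, piv i = 1) (hfix : piv ᵥ* P = piv) : ∀ j, 0 < piv j := by
  have hpowfix : ∀ k, piv ᵥ* P ^ k = piv := by
    intro k; induction k with
    | zero => simp
    | succ k ih => rw [pow_succ, ← Matrix.vecMul_vecMul, ih, hfix]
  have hpow0 : ∀ k i j, 0 ≤ (P ^ k) i j := by
    intro k; induction k with
    | zero =>
        intro i j; rw [pow_zero, Matrix.one_apply]
        split <;> norm_num
    | succ k ih =>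
        intro i j; rw [pow_succ, Matrix.mul_apply]
        exact Finset.sum_nonneg fun m _ => mul_nonneg (ih i m) (hP0 m j)
  have hex : ∃ i, 0 < piv i := by
    by_contra h; push_neg at h
    have hz : ∀ i, piv i = 0 := fun i => le_antisymm (h i) (h0 i)
    rw [Finset.sum_congr rfl fun i _ => hz i] at h1
    simp at h1
  obtain ⟨i0, hi0⟩ := hex
  intro j
  obtain ⟨k, hk⟩ := hirr i0 j
  have hj := congrFun (hpowfix k) j
  simp only [Matrix.vecMul, dotProduct] at hj
  have hterm : piv i0 * (P ^ k) i0 j ≤ ∑ i, piv i * (P ^ k) i j :=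
    Finset.single_le_sum (fun i _ => mul_nonneg (h0 i) (hpow0 k i j)) (Finset.mem_univ i0)
  have := mul_pos hi0 hk
  linarith

lemma aux_extremePoints_finite {ι F : Type*} [Fintype ι] [AddCommGroup F] [Module ℝ F]
    (L : (ι → ℝ) →ₗ[ℝ] F) (c : F) :
    (({x : ι → ℝ | (∀ i, 0 ≤ x i) ∧ L x = c}).extremePoints ℝ).Finite := by
  set s : Set (ι → ℝ) := {x | (∀ i, 0 ≤ x i) ∧ L x = c} with hs
  apply Set.Finite.of_finite_image (f := fun x : ι → ℝ => {i | x i = 0}) (Set.toFinite _)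
  intro x hx y hy hxy
  by_contra hne
  set d : ι → ℝ := y - x with hd
  obtain ⟨i0, hi0⟩ : ∃ i, d i ≠ 0 := by
    by_contra h; push_neg at h; apply hne; funext i
    have := h i; simp [hd, sub_eq_zero] at this; exact this.symm
  have hzero : ∀ i, x i = 0 → d i = 0 := by
    intro i h
    have hyi : y i = 0 := (Set.ext_iff.mp hxy i).mp h
    simp [hd, h, hyi]
  set cf : ι → ℝ := fun i => if d i = 0 then 1 else x i / |d i| with hcf
  have hcpos : ∀ i, 0 < cf i := by
    intro i
    by_cases h : d i = 0
    · simp [hcf, h]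
    · have hxi : 0 < x i := lt_of_le_of_ne (hx.1.1 i) fun e => h (hzero i e.symm)
      have : 0 < |d i| := abs_pos.mpr h
      simp only [hcf, if_neg h]
      positivity
  set ε : ℝ := Finset.univ.inf' (Finset.univ_nonempty_iff.mpr ⟨i0⟩) cf with hε
  have hεpos : 0 < ε := by
    rw [hε, Finset.lt_inf'_iff]; exact fun i _ => hcpos i
  have hbound : ∀ i, ε * |d i| ≤ x i := by
    intro i
    by_cases h : d i = 0
    · simp [h, hx.1.1 i]
    · have h1 : ε ≤ x i / |d i| := by
        have h2 : ε ≤ cf i := Finset.inf'_le cf (Finset.mem_univ i)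
        simpa [hcf, if_neg h] using h2
      exact (le_div_iff₀ (abs_pos.mpr h)).mp h1
  have hmem : ∀ t : ℝ, |t| ≤ ε → x + t • d ∈ s := by
    intro t ht
    constructor
    · intro i
      have h1 : |t * d i| ≤ ε * |d i| := by
        rw [abs_mul]; exact mul_le_mul_of_nonneg_right ht (abs_nonneg _)
      have h2 := hbound i
      have h3 := neg_abs_le (t * d i)
      simp only [Pi.add_apply, Pi.smul_apply, smul_eq_mul]
      linarith
    · have hLd : L d = 0 := by rw [hd, map_sub, hx.1.2, hy.1.2, sub_self]
      rw [map_add, _root_.map_smul, hLd, smul_zero, add_zero, hx.1.2]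
  have h1 : x + ε • d ∈ s := hmem ε (by rw [abs_of_pos hεpos])
  have h2 : x + (-ε) • d ∈ s := hmem (-ε) (by rw [abs_neg, abs_of_pos hεpos])
  have hseg : x ∈ openSegment ℝ (x + ε • d) (x + (-ε) • d) := by
    refine ⟨1/2, 1/2, by norm_num, by norm_num, by norm_num, ?_⟩
    funext i
    simp only [Pi.add_apply, Pi.smul_apply, smul_eq_mul, neg_smul, Pi.neg_apply]
    ring
  have heq := hx.2 h1 h2 hseg
  have : ε • d = 0 := by
    have := congrArg (fun z => z - x) heq
    simpa [add_sub_cancel_left] using this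
  have := congrFun this i0
  simp only [Pi.smul_apply, smul_eq_mul, Pi.zero_apply, mul_eq_zero] at this
  rcases this with h | h
  · exact hεpos.ne' h
  · exact hi0 h

lemma aux_compact {ι F : Type*} [Fintype ι] [NormedAddCommGroup F] [NormedSpace ℝ F]
    (L : (ι → ℝ) →ₗ[ℝ] F) (c : F)
    (hsum : ∀ x : ι → ℝ, ((∀ i, 0 ≤ x i) ∧ L x = c) → ∑ i, x i = 1) :
    IsCompact {x : ι → ℝ | (∀ i, 0 ≤ x i) ∧ L x = c} := by
  have hcl : IsClosed {x : ι → ℝ | (∀ i, 0 ≤ x i) ∧ L x = c} := by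
    have e : {x : ι → ℝ | (∀ i, 0 ≤ x i) ∧ L x = c}
        = (⋂ i, {x : ι → ℝ | 0 ≤ x i}) ∩ {x | L x = c} := by
      ext x; simp [Set.mem_iInter]
    rw [e]
    exact (isClosed_iInter fun i =>
        isClosed_le continuous_const (continuous_apply i)).inter
      (isClosed_eq L.continuous_of_finiteDimensional continuous_const)
  apply IsCompact.of_isClosed_subset (isCompact_Icc (a := (0 : ι → ℝ)) (b := 1)) hcl
  intro x hx
  rw [Set.mem_Icc]
  refine ⟨fun i => hx.1 i, fun i => ?_⟩
  have := Finset.single_le_sum (f := x) (fun j _ => hx.1 j) (Finset.mem_univ i)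
  rw [hsum x hx] at this
  simpa using this

theorem stmt17 (n : ℕ) (Pset : Fin n → Set (Fin n → ℝ))
    (hsub : ∀ i, Pset i ⊆ stdSimplex ℝ (Fin n))
    (hclosed : ∀ i, IsClosed (Pset i)) (hconv : ∀ i, Convex ℝ (Pset i))
    (hirr : ∀ P : Matrix (Fin n) (Fin n) ℝ, (∀ i, P i ∈ Pset i) → IsIrredMat P) :
    IsClosed
      {ρ : Matrix (Fin n) (Fin n) ℝ | ∃ (P : Matrix (Fin n) (Fin n) ℝ) (piv : Fin n → ℝ),
        (∀ i, P i ∈ Pset i) ∧ (∀ i, 0 ≤ piv i) ∧ (∑ i, piv i = 1) ∧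
        piv ᵥ* P = piv ∧ ∀ i j, ρ i j = piv i * P i j} ∧
    Convex ℝ
      {ρ : Matrix (Fin n) (Fin n) ℝ | ∃ (P : Matrix (Fin n) (Fin n) ℝ) (piv : Fin n → ℝ),
        (∀ i, P i ∈ Pset i) ∧ (∀ i, 0 ≤ piv i) ∧ (∑ i, piv i = 1) ∧
        piv ᵥ* P = piv ∧ ∀ i j, ρ i j = piv i * P i j} ∧
    ((∀ i, ∃ V : Finset (Fin n → ℝ), Pset i = convexHull ℝ (V : Set (Fin n → ℝ))) →
      ∃ W : Finset (Matrix (Fin n) (Fin n) ℝ),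
        {ρ : Matrix (Fin n) (Fin n) ℝ | ∃ (P : Matrix (Fin n) (Fin n) ℝ) (piv : Fin n → ℝ),
          (∀ i, P i ∈ Pset i) ∧ (∀ i, 0 ≤ piv i) ∧ (∑ i, piv i = 1) ∧
          piv ᵥ* P = piv ∧ ∀ i j, ρ i j = piv i * P i j}
        = convexHull ℝ (W : Set (Matrix (Fin n) (Fin n) ℝ))) := by
  refine ⟨?_, ?_, ?_⟩
  · -- Closedness
      set K : Set ((Fin n → Fin n → ℝ) × (Fin n → ℝ)) :=
        {x | (∀ i, x.1 i ∈ Pset i) ∧ (∀ i, 0 ≤ x.2 i) ∧ (∑ i, x.2 i = 1) ∧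
          (∀ j, ∑ i, x.2 i * x.1 i j = x.2 j)} with hK
      have hKsub : K ⊆ Set.Icc (0 : (Fin n → Fin n → ℝ) × (Fin n → ℝ)) 1 := by
        rintro ⟨P, piv⟩ hx
        obtain ⟨h1, h2, h3, _⟩ := hx
        rw [Set.mem_Icc]
        constructor
        · constructor
          · intro i j
            exact (hsub i (h1 i)).1 j
          · intro i
            exact h2 i
        · constructor
          · intro i j
            have hs := (hsub i (h1 i))
            have := Finset.single_le_sum (f := fun j => P i j) (fun m _ => hs.1 m) (Finset.mem_univ j)
            rw [hs.2] at this
            exact this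
          · intro i
            have := Finset.single_le_sum (f := piv) (fun m _ => h2 m) (Finset.mem_univ i)
            rw [h3] at this
            exact this
      have hKclosed : IsClosed K := by
        have e : K = (⋂ i, {x : (Fin n → Fin n → ℝ) × (Fin n → ℝ) | x.1 i ∈ Pset i}) ∩
            ((⋂ i, {x : (Fin n → Fin n → ℝ) × (Fin n → ℝ) | 0 ≤ x.2 i}) ∩
              ({x : (Fin n → Fin n → ℝ) × (Fin n → ℝ) | ∑ i, x.2 i = 1} ∩
                ⋂ j, {x : (Fin n → Fin n → ℝ) × (Fin n → ℝ) | ∑ i, x.2 i * x.1 i j = x.2 j})) := by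
          ext x; simp only [hK, Set.mem_setOf_eq, Set.mem_inter_iff, Set.mem_iInter]
        rw [e]
        refine IsClosed.inter (isClosed_iInter fun i => ?_)
          (IsClosed.inter (isClosed_iInter fun i => ?_) (IsClosed.inter ?_ (isClosed_iInter fun j => ?_)))
        · exact (hclosed i).preimage ((continuous_apply i).comp continuous_fst)
        · exact isClosed_le continuous_const ((continuous_apply i).comp continuous_snd)
        · exact isClosed_eq (continuous_finset_sum _ fun i _ =>
            (continuous_apply i).comp continuous_snd) continuous_const
        · exact isClosed_eq (continuous_finset_sum _ fun i _ =>
            (((continuous_apply i).comp continuous_snd).mul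
              ((continuous_apply j).comp ((continuous_apply i).comp continuous_fst))))
            ((continuous_apply j).comp continuous_snd)
      have hKcomp : IsCompact K := IsCompact.of_isClosed_subset isCompact_Icc hKclosed hKsub
      set f : ((Fin n → Fin n → ℝ) × (Fin n → ℝ)) → Matrix (Fin n) (Fin n) ℝ :=
        fun x => Matrix.of fun i j => x.2 i * x.1 i j with hf
      have hfc : Continuous f := by
        apply continuous_pi; intro i; apply continuous_pi; intro j
        exact ((continuous_apply i).comp continuous_snd).mul
          ((continuous_apply j).comp ((continuous_apply i).comp continuous_fst))
      have himg : {ρ : Matrix (Fin n) (Fin n) ℝ | ∃ (P : Matrix (Fin n) (Fin n) ℝ) (piv : Fin n → ℝ),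
            (∀ i, P i ∈ Pset i) ∧ (∀ i, 0 ≤ piv i) ∧ (∑ i, piv i = 1) ∧
            piv ᵥ* P = piv ∧ ∀ i j, ρ i j = piv i * P i j} = f '' K := by
        ext ρ
        simp only [Set.mem_setOf_eq, Set.mem_image, hK, hf]
        constructor
        · rintro ⟨P, piv, h1, h2, h3, h4, h5⟩
          refine ⟨(P, piv), ⟨h1, h2, h3, fun j => ?_⟩, ?_⟩
          · have := congrFun h4 j
            simpa [Matrix.vecMul, dotProduct] using this
          · funext i j
            exact (h5 i j).symm
        · rintro ⟨⟨P, piv⟩, ⟨h1, h2, h3, h4⟩, rfl⟩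
          refine ⟨P, piv, h1, h2, h3, ?_, fun i j => rfl⟩
          funext j
          simpa [Matrix.vecMul, dotProduct] using h4 j
      rw [himg]
      exact (hKcomp.image hfc).isClosed
  · -- Convexity
      rintro ρ₁ hρ₁ ρ₂ hρ₂ a b ha hb hab
      rcases eq_or_lt_of_le ha with ha0 | ha'
      · have hb1 : b = 1 := by linarith
        have e : a • ρ₁ + b • ρ₂ = ρ₂ := by rw [← ha0, hb1, zero_smul, one_smul, zero_add]
        rw [Set.mem_setOf_eq] at hρ₂ ⊢
        rwa [e]
      rcases eq_or_lt_of_le hb with hb0 | hb'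
      · have ha1 : a = 1 := by linarith
        have e : a • ρ₁ + b • ρ₂ = ρ₁ := by rw [← hb0, ha1, zero_smul, one_smul, add_zero]
        rw [Set.mem_setOf_eq] at hρ₁ ⊢
        rwa [e]
      obtain ⟨P₁, π₁, hP₁, hπ₁0, hπ₁1, hfix₁, hr₁⟩ := hρ₁
      obtain ⟨P₂, π₂, hP₂, hπ₂0, hπ₂1, hfix₂, hr₂⟩ := hρ₂
      have hpos₁ : ∀ i, 0 < π₁ i :=
        aux_piv_pos P₁ π₁ (fun i j => (hsub i (hP₁ i)).1 j) (hirr P₁ hP₁) hπ₁0 hπ₁1 hfix₁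
      have hpos₂ : ∀ i, 0 < π₂ i :=
        aux_piv_pos P₂ π₂ (fun i j => (hsub i (hP₂ i)).1 j) (hirr P₂ hP₂) hπ₂0 hπ₂1 hfix₂
      set π : Fin n → ℝ := fun i => a * π₁ i + b * π₂ i with hπ
      have hπpos : ∀ i, 0 < π i := fun i =>
        add_pos (mul_pos ha' (hpos₁ i)) (mul_pos hb' (hpos₂ i))
      set P : Matrix (Fin n) (Fin n) ℝ :=
        Matrix.of fun i j => (a * π₁ i * P₁ i j + b * π₂ i * P₂ i j) / π i with hP
      refine ⟨P, π, ?_, fun i => (hπpos i).le, ?_, ?_, ?_⟩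
      · intro i
        have h1 : (0:ℝ) ≤ a * π₁ i / π i := by
          have := hπpos i; have := hpos₁ i; positivity
        have h2 : (0:ℝ) ≤ b * π₂ i / π i := by
          have := hπpos i; have := hpos₂ i; positivity
        have h3 : a * π₁ i / π i + b * π₂ i / π i = 1 := by
          rw [← add_div, div_eq_one_iff_eq (hπpos i).ne']
        have hmem := hconv i (hP₁ i) (hP₂ i) h1 h2 h3
        have hPi : P i = (a * π₁ i / π i) • P₁ i + (b * π₂ i / π i) • P₂ i := by
          funext j
          simp only [hP, Matrix.of_apply, Pi.add_apply, Pi.smul_apply, smul_eq_mul]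
          field_simp
        rw [hPi]
        exact hmem
      · simp only [hπ, Finset.sum_add_distrib, ← Finset.mul_sum, hπ₁1, hπ₂1, mul_one]
        exact hab
      · funext j
        have e1 := congrFun hfix₁ j
        have e2 := congrFun hfix₂ j
        simp only [Matrix.vecMul, dotProduct] at e1 e2 ⊢
        have step : ∀ i, π i * P i j = a * (π₁ i * P₁ i j) + b * (π₂ i * P₂ i j) := by
          intro i
          simp only [hP, Matrix.of_apply]
          rw [mul_comm, div_mul_cancel₀ _ (hπpos i).ne']
          ring
        calc ∑ i, π i * P i j = ∑ i, (a * (π₁ i * P₁ i j) + b * (π₂ i * P₂ i j)) :=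
              Finset.sum_congr rfl fun i _ => step i
          _ = a * ∑ i, π₁ i * P₁ i j + b * ∑ i, π₂ i * P₂ i j := by
              rw [Finset.sum_add_distrib, Finset.mul_sum, Finset.mul_sum]
          _ = a * π₁ j + b * π₂ j := by rw [e1, e2]
      · intro i j
        have : (a • ρ₁ + b • ρ₂) i j = a * ρ₁ i j + b * ρ₂ i j := by
          simp [Matrix.add_apply, Matrix.smul_apply, smul_eq_mul]
        rw [this, hr₁ i j, hr₂ i j]
        show _ = π i * P i j
        simp only [hP, Matrix.of_apply]
        rw [mul_comm (π i), div_mul_cancel₀ _ (hπpos i).ne']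
        ring
  · -- Polytope
      intro hpoly
      by_cases hne : ∀ i, (Pset i).Nonempty
      case neg =>
        push_neg at hne
        obtain ⟨i, hi⟩ := hne
        refine ⟨∅, ?_⟩
        rw [Finset.coe_empty, convexHull_empty, Set.eq_empty_iff_forall_notMem]
        rintro ρ ⟨P, piv, hP, -⟩
        have := hP i
        rw [hi] at this
        exact this
      case pos =>
        choose V hV using hpoly
        choose p hp using hne
        set σ : Type := (i : Fin n) × {v : Fin n → ℝ // v ∈ V i} with hσ
        set Φ : (σ → ℝ) →ₗ[ℝ] Matrix (Fin n) (Fin n) ℝ :=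
          { toFun := fun l => Matrix.of fun i j =>
              ∑ v : {v : Fin n → ℝ // v ∈ V i}, l ⟨i, v⟩ * (v : Fin n → ℝ) j
            map_add' := by
              intro l m
              funext i j
              simp [add_mul, Finset.sum_add_distrib]
            map_smul' := by
              intro r l
              funext i j
              simp [Finset.mul_sum, mul_assoc] } with hΦ
        have hΦapp : ∀ (l : σ → ℝ) i j,
            Φ l i j = ∑ v : {v : Fin n → ℝ // v ∈ V i}, l ⟨i, v⟩ * (v : Fin n → ℝ) j :=
          fun l i j => rfl
        set L : (σ → ℝ) →ₗ[ℝ] ℝ × (Fin n → ℝ) :=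
          { toFun := fun l => (∑ x, l x,
              fun j => (∑ i, Φ l i j) - ∑ v : {v : Fin n → ℝ // v ∈ V j}, l ⟨j, v⟩)
            map_add' := by
              intro l m
              refine Prod.ext ?_ ?_
              · simp [Finset.sum_add_distrib]
              · funext j
                simp only [Φ.map_add, Matrix.add_apply, Pi.add_apply, Prod.snd_add,
                  Finset.sum_add_distrib]
                ring
            map_smul' := by
              intro r l
              refine Prod.ext ?_ ?_
              · simp [Finset.mul_sum]
              · funext j
                simp only [Φ.map_smul, Matrix.smul_apply, Pi.smul_apply, Prod.smul_snd,
                  smul_eq_mul, RingHom.id_apply]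
                rw [mul_sub, Finset.mul_sum, Finset.mul_sum] } with hL
        have hLapp : ∀ l : σ → ℝ, L l = (∑ x, l x,
            fun j => (∑ i, Φ l i j) - ∑ v : {v : Fin n → ℝ // v ∈ V j}, l ⟨j, v⟩) :=
          fun l => rfl
        set Λ : Set (σ → ℝ) := {l | (∀ x, 0 ≤ l x) ∧ L l = (1, 0)} with hΛ
        -- The occupation measure set equals the image of Λ under Φ
        have hset : {ρ : Matrix (Fin n) (Fin n) ℝ | ∃ (P : Matrix (Fin n) (Fin n) ℝ) (piv : Fin n → ℝ),
              (∀ i, P i ∈ Pset i) ∧ (∀ i, 0 ≤ piv i) ∧ (∑ i, piv i = 1) ∧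
              piv ᵥ* P = piv ∧ ∀ i j, ρ i j = piv i * P i j} = Φ '' Λ := by
          ext ρ
          simp only [Set.mem_setOf_eq, Set.mem_image]
          constructor
          · rintro ⟨P, piv, hP, hpiv0, hpiv1, hfix, hρ⟩
            have hw : ∀ i, ∃ w : (Fin n → ℝ) → ℝ, (∀ y ∈ V i, 0 ≤ w y) ∧
                (∑ y ∈ V i, w y = 1) ∧ ∑ y ∈ V i, w y • y = P i := by
              intro i
              apply Finset.mem_convexHull'.mp
              rw [← hV i]
              exact hP i
            choose w hw0 hw1 hw2 using hw
            set l : σ → ℝ := fun x => piv x.1 * w x.1 x.2 with hl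
            have hkey : ∀ i j, Φ l i j = piv i * P i j := by
              intro i j
              rw [hΦapp]
              have e1 : ∀ v : {v : Fin n → ℝ // v ∈ V i},
                  l ⟨i, v⟩ * (v : Fin n → ℝ) j = piv i * (w i v * (v : Fin n → ℝ) j) := by
                intro v; rw [hl]; ring
              rw [Finset.sum_congr rfl fun v _ => e1 v, ← Finset.mul_sum]
              congr 1
              have := congrFun (hw2 i) j
              rw [Finset.sum_apply] at this
              rw [← this, Finset.sum_coe_sort (V i) (fun y => w i y * y j)]
              exact Finset.sum_congr rfl fun y _ => rfl
            refine ⟨l, ⟨fun x => mul_nonneg (hpiv0 x.1) (hw0 x.1 x.2 x.2.2), ?_⟩, ?_⟩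
            · rw [hLapp]
              refine Prod.ext ?_ ?_
              · show (∑ x : σ, l x) = 1
                rw [← Finset.univ_sigma_univ, Finset.sum_sigma]
                have : ∀ i, ∑ v : {v : Fin n → ℝ // v ∈ V i}, l ⟨i, v⟩ = piv i := by
                  intro i
                  rw [hl]
                  simp only []
                  rw [← Finset.mul_sum, Finset.sum_coe_sort (V i) (w i), hw1 i, mul_one]
                rw [Finset.sum_congr rfl fun i _ => this i]
                exact hpiv1
              · funext j
                show (∑ i, Φ l i j) - ∑ v : {v : Fin n → ℝ // v ∈ V j}, l ⟨j, v⟩ = 0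
                have e2 : ∑ v : {v : Fin n → ℝ // v ∈ V j}, l ⟨j, v⟩ = piv j := by
                  rw [hl]
                  simp only []
                  rw [← Finset.mul_sum, Finset.sum_coe_sort (V j) (w j), hw1 j, mul_one]
                have e3 := congrFun hfix j
                simp only [Matrix.vecMul, dotProduct] at e3
                rw [Finset.sum_congr rfl fun i _ => hkey i j, e2, e3, sub_self]
            · funext i j
              rw [hkey i j, ← hρ i j]
          · rintro ⟨l, ⟨hl0, hlL⟩, rfl⟩
            set π : Fin n → ℝ := fun i => ∑ v : {v : Fin n → ℝ // v ∈ V i}, l ⟨i, v⟩ with hπ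
            have hπ0 : ∀ i, 0 ≤ π i := fun i => Finset.sum_nonneg fun v _ => hl0 ⟨i, v⟩
            have hπ1 : ∑ i, π i = 1 := by
              have := congrArg Prod.fst hlL
              rw [hLapp] at this
              simp only [] at this
              rw [← this, ← Finset.univ_sigma_univ, Finset.sum_sigma]
            have hcol : ∀ j, ∑ i, Φ l i j = π j := by
              intro j
              have h := congrFun (congrArg Prod.snd hlL) j
              rw [hLapp] at h
              simp only [Prod.snd_zero, Pi.zero_apply] at h
              have := sub_eq_zero.mp h
              exact this
            have hzrow : ∀ i, π i = 0 → ∀ v : {v : Fin n → ℝ // v ∈ V i}, l ⟨i, v⟩ = 0 := by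
              intro i h v
              have := (Finset.sum_eq_zero_iff_of_nonneg
                (fun v _ => hl0 ⟨i, (v : {v : Fin n → ℝ // v ∈ V i})⟩)).mp h v (Finset.mem_univ v)
              exact this
            have hΦ0 : ∀ i, π i = 0 → ∀ j, Φ l i j = 0 := by
              intro i h j
              rw [hΦapp]
              exact Finset.sum_eq_zero fun v _ => by rw [hzrow i h v, zero_mul]
            set P : Matrix (Fin n) (Fin n) ℝ :=
              Matrix.of fun i j => if 0 < π i then (π i)⁻¹ * Φ l i j else p i j with hPdef
            have hPapp : ∀ i j, P i j = if 0 < π i then (π i)⁻¹ * Φ l i j else p i j :=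
              fun i j => rfl
            refine ⟨P, π, ?_, hπ0, hπ1, ?_, ?_⟩
            · intro i
              by_cases h : 0 < π i
              · rw [hV i]
                apply mem_convexHull_of_exists_fintype
                  (w := fun v : {v : Fin n → ℝ // v ∈ V i} => (π i)⁻¹ * l ⟨i, v⟩)
                  (z := fun v : {v : Fin n → ℝ // v ∈ V i} => (v : Fin n → ℝ))
                · intro v
                  exact mul_nonneg (inv_nonneg.mpr h.le) (hl0 ⟨i, v⟩)
                · rw [← Finset.mul_sum]
                  exact inv_mul_cancel₀ h.ne'
                · intro v
                  exact Finset.mem_coe.mpr v.2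
                · funext j
                  rw [Finset.sum_apply]
                  have : ∀ v : {v : Fin n → ℝ // v ∈ V i},
                      (((π i)⁻¹ * l ⟨i, v⟩) • (v : Fin n → ℝ)) j
                        = (π i)⁻¹ * (l ⟨i, v⟩ * (v : Fin n → ℝ) j) := by
                    intro v
                    simp only [Pi.smul_apply, smul_eq_mul]
                    ring
                  rw [Finset.sum_congr rfl fun v _ => this v, ← Finset.mul_sum, ← hΦapp]
                  rw [hPapp, if_pos h]
              · have : P i = p i := by
                  funext j
                  rw [hPapp, if_neg h]
                rw [this]
                exact hp i
            · funext j
              simp only [Matrix.vecMul, dotProduct]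
              have term : ∀ i, π i * P i j = Φ l i j := by
                intro i
                rw [hPapp]
                by_cases h : 0 < π i
                · rw [if_pos h, ← mul_assoc, mul_inv_cancel₀ h.ne', one_mul]
                · have h0 : π i = 0 := le_antisymm (not_lt.mp h) (hπ0 i)
                  rw [h0, zero_mul, hΦ0 i h0 j]
              rw [Finset.sum_congr rfl fun i _ => term i]
              exact hcol j
            · intro i j
              rw [hPapp]
              by_cases h : 0 < π i
              · rw [if_pos h, ← mul_assoc, mul_inv_cancel₀ h.ne', one_mul]
              · have h0 : π i = 0 := le_antisymm (not_lt.mp h) (hπ0 i)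
                rw [h0, zero_mul, hΦ0 i h0 j]
        -- Λ is compact and convex, so by Krein-Milman it's the hull of its (finitely many)
        -- extreme points
        have hsum : ∀ l : σ → ℝ, ((∀ x, 0 ≤ l x) ∧ L l = (1, 0)) → ∑ x, l x = 1 := by
          intro l hl
          have := congrArg Prod.fst hl.2
          rw [hLapp] at this
          exact this
        have hcomp : IsCompact Λ := aux_compact L (1, 0) hsum
        have hconvΛ : Convex ℝ Λ := by
          intro x hx y hy a b ha hb hab
          refine ⟨fun i => ?_, ?_⟩
          · have h1 := hx.1 i
            have h2 := hy.1 i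
            simp only [Pi.add_apply, Pi.smul_apply, smul_eq_mul]
            have := add_nonneg (mul_nonneg ha h1) (mul_nonneg hb h2)
            exact this
          · rw [map_add, _root_.map_smul, _root_.map_smul, hx.2, hy.2, ← add_smul, hab, one_smul]
        have hfin : (Λ.extremePoints ℝ).Finite := aux_extremePoints_finite L (1, 0)
        have hΛhull : Λ = convexHull ℝ (Λ.extremePoints ℝ) := by
          have h1 := closure_convexHull_extremePoints hcomp hconvΛ
          have h2 : IsClosed (convexHull ℝ (Λ.extremePoints ℝ)) :=
            (hfin.isCompact_convexHull (𝕜 := ℝ)).isClosed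
          rw [← h2.closure_eq]
          exact h1.symm
        have himg : ⇑Φ '' Λ = convexHull ℝ (⇑Φ '' (Λ.extremePoints ℝ)) := by
          rw [← Φ.image_convexHull]
          exact congrArg _ hΛhull
        refine ⟨(hfin.image ⇑Φ).toFinset, ?_⟩
        rw [hset, Set.Finite.coe_toFinset]
        exact himg
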